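/- In the confounder-only linear structural equation model, assume additionally that E[X¹ (X¹)ᵀ] = Σ₁ is positive definite, E[ζ ζᵀ] = diag(σ_ζ²) with every entry of σ_ζ² ∈ ℝ^q strictly positive, and E[X¹] = 0. Then the population least squares problem min over w ∈ ℝ^{p+q} of E[(Y − wᵀ X)²], where X = (X¹, X²), has the unique minimizer w* = (γ, (Θ Θᵀ + diag(σ_ζ²))⁻¹ Θ η). -/

import Mathlib

open MeasureTheory ProbabilityTheory Matrix

private lemma my_int_mul {Ω : Type*} [MeasurableSpace Ω] {μ : Measure Ω} {f g : Ω → ℝ}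
    (hf : MemLp f 2 μ) (hg : MemLp g 2 μ) : Integrable (fun ω => f ω * g ω) μ := by
  refine (hf.integrable_sq.add hg.integrable_sq).mono'
    (hf.aestronglyMeasurable.mul hg.aestronglyMeasurable) (ae_of_all _ fun ω => ?_)
  simp only [Pi.add_apply, Real.norm_eq_abs, abs_mul]
  nlinarith [abs_nonneg (f ω), abs_nonneg (g ω), sq_nonneg (|f ω| - |g ω|), sq_abs (f ω),
    sq_abs (g ω)]

private lemma my_int_comm {Ω : Type*} [MeasurableSpace Ω] (μ : Measure Ω) (f g : Ω → ℝ) :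
    ∫ ω, f ω * g ω ∂μ = ∫ ω, g ω * f ω ∂μ :=
  integral_congr_ae (Filter.Eventually.of_forall fun ω => mul_comm _ _)

private lemma my_sum_mul {Ω : Type*} [MeasurableSpace Ω] (μ : Measure Ω) {n : ℕ}
    (c : Fin n → ℝ) (F : Fin n → Ω → ℝ) (G : Ω → ℝ)
    (h : ∀ j, Integrable (fun ω => F j ω * G ω) μ) :
    ∫ ω, (∑ j, c j * F j ω) * G ω ∂μ = ∑ j, c j * ∫ ω, F j ω * G ω ∂μ := by
  have key : (fun ω => (∑ j, c j * F j ω) * G ω) = fun ω => ∑ j, c j * (F j ω * G ω) := by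
    funext ω
    rw [Finset.sum_mul]
    exact Finset.sum_congr rfl fun j _ => mul_assoc _ _ _
  rw [key, integral_finset_sum _ fun j _ => (h j).const_mul (c j)]
  exact Finset.sum_congr rfl fun j _ => integral_const_mul _ _

private lemma my_quadform {n : ℕ} (M : Matrix (Fin n) (Fin n) ℝ) (x : Fin n → ℝ) :
    ∑ i, x i * ∑ j, x j * M j i = dotProduct x (Mᵀ *ᵥ x) := by
  simp only [Matrix.mulVec, dotProduct, Matrix.transpose_apply, Finset.mul_sum]
  exact Finset.sum_congr rfl fun i _ => Finset.sum_congr rfl fun j _ => by ring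

/-- **Proposition 2 of the paper.** In the confounder-only linear SEM,
with `E[X¹ (X¹)ᵀ] = Σ₁` positive definite, `E[ζ ζᵀ] = diag(σ_ζ²)` with strictly
positive entries, and `E[X¹] = 0`, the population least squares problem
`min_w E[(Y − wᵀ X)²]` over `w ∈ ℝ^{p+q}`, where `X = (X¹, X²)`, has the unique
minimizer `w* = (γ, (Θ Θᵀ + diag(σ_ζ²))⁻¹ Θ η)`. -/
theorem sem_least_squares_solution {Ω : Type*} [MeasurableSpace Ω]
    (μ : Measure Ω) [IsProbabilityMeasure μ] {p s q : ℕ}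
    (X₁ : Ω → Fin p → ℝ) (H : Ω → Fin s → ℝ) (Z : Ω → Fin q → ℝ) (ε : Ω → ℝ)
    (hX₁m : Measurable X₁) (hHm : Measurable H) (hZm : Measurable Z)
    (hεm : Measurable ε)
    (hX₁2 : ∀ i, MemLp (fun ω => X₁ ω i) 2 μ)
    (hH2 : ∀ j, MemLp (fun ω => H ω j) 2 μ)
    (hZ2 : ∀ k, MemLp (fun ω => Z ω k) 2 μ)
    (hε2 : MemLp ε 2 μ)
    (hX₁H : IndepFun X₁ H μ) (hX₁Z : IndepFun X₁ Z μ) (hX₁ε : IndepFun X₁ ε μ)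
    (hHZ : IndepFun H Z μ) (hHε : IndepFun H ε μ) (hZε : IndepFun Z ε μ)
    (hHmean : ∀ j, ∫ ω, H ω j ∂μ = 0)
    (hZmean : ∀ k, ∫ ω, Z ω k ∂μ = 0)
    (hεmean : ∫ ω, ε ω ∂μ = 0)
    (hHcov : ∀ j j', ∫ ω, H ω j * H ω j' ∂μ = if j = j' then 1 else 0)
    (γ : Fin p → ℝ) (η : Fin s → ℝ) (Θ : Matrix (Fin q) (Fin s) ℝ)
    (Y : Ω → ℝ) (X₂ : Ω → Fin q → ℝ)
    (hY : ∀ ω, Y ω = (∑ i, γ i * X₁ ω i) + (∑ j, η j * H ω j) + ε ω)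
    (hX₂ : ∀ ω k, X₂ ω k = (∑ j, Θ k j * H ω j) + Z ω k)
    -- additional assumptions of Statement 10:
    (hX₁mean : ∀ i, ∫ ω, X₁ ω i ∂μ = 0)
    (hSigma1pd : Matrix.PosDef (Matrix.of fun i i' : Fin p => ∫ ω, X₁ ω i * X₁ ω i' ∂μ))
    (σζsq : Fin q → ℝ) (hσζpos : ∀ k, 0 < σζsq k)
    (hZcov : ∀ k k', ∫ ω, Z ω k * Z ω k' ∂μ = if k = k' then σζsq k else 0) :
    (∀ w : Fin (p + q) → ℝ,
        ∫ ω, (Y ω - ∑ i, Fin.append γ ((Θ * Θᵀ + Matrix.diagonal σζsq)⁻¹ *ᵥ (Θ *ᵥ η)) i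
                * Fin.append (X₁ ω) (X₂ ω) i) ^ 2 ∂μ
      ≤ ∫ ω, (Y ω - ∑ i, w i * Fin.append (X₁ ω) (X₂ ω) i) ^ 2 ∂μ) ∧
    (∀ w : Fin (p + q) → ℝ,
      (∀ u : Fin (p + q) → ℝ,
        ∫ ω, (Y ω - ∑ i, w i * Fin.append (X₁ ω) (X₂ ω) i) ^ 2 ∂μ
          ≤ ∫ ω, (Y ω - ∑ i, u i * Fin.append (X₁ ω) (X₂ ω) i) ^ 2 ∂μ) →
      w = Fin.append γ ((Θ * Θᵀ + Matrix.diagonal σζsq)⁻¹ *ᵥ (Θ *ᵥ η))) := by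
  classical
  set A : Matrix (Fin q) (Fin q) ℝ := Θ * Θᵀ + Matrix.diagonal σζsq with hAdef
  set v : Fin q → ℝ := A⁻¹ *ᵥ (Θ *ᵥ η) with hvdef
  set ws : Fin (p + q) → ℝ := Fin.append γ v with hws
  -- positive definiteness of A
  have hΘΘ : (Θ * Θᵀ).PosSemidef := by
    have h := Matrix.posSemidef_self_mul_conjTranspose Θ
    rwa [Matrix.conjTranspose_eq_transpose_of_trivial] at h
  have hApd : A.PosDef := Matrix.PosDef.posSemidef_add hΘΘ (Matrix.PosDef.diagonal hσζpos)
  have hAv : A *ᵥ v = Θ *ᵥ η := by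
    rw [hvdef, Matrix.mulVec_mulVec,
      Matrix.mul_nonsing_inv _ ((Matrix.isUnit_iff_isUnit_det A).1 hApd.isUnit),
      Matrix.one_mulVec]
  have hAsymm : ∀ l k, A l k = A k l := by
    intro l k
    conv_lhs => rw [← hApd.1]
    simp [Matrix.conjTranspose_apply]
  -- membership of X₂ components in L²
  have hX₂2 : ∀ k, MemLp (fun ω => X₂ ω k) 2 μ := by
    intro k
    have h : (fun ω => X₂ ω k) = fun ω => (∑ j, Θ k j * H ω j) + Z ω k :=
      funext fun ω => hX₂ ω k
    rw [h]
    exact (memLp_finset_sum _ fun j _ => (hH2 j).const_mul (Θ k j)).add (hZ2 k)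
  -- independence of components
  have iHX₁ : ∀ j i, IndepFun (fun ω => H ω j) (fun ω => X₁ ω i) μ :=
    fun j i => (hX₁H.comp (measurable_pi_apply i) (measurable_pi_apply j)).symm
  have iZX₁ : ∀ k i, IndepFun (fun ω => Z ω k) (fun ω => X₁ ω i) μ :=
    fun k i => (hX₁Z.comp (measurable_pi_apply i) (measurable_pi_apply k)).symm
  have iεX₁ : ∀ i, IndepFun ε (fun ω => X₁ ω i) μ :=
    fun i => (hX₁ε.comp (measurable_pi_apply i) measurable_id).symm
  have iHZ' : ∀ j k, IndepFun (fun ω => H ω j) (fun ω => Z ω k) μ :=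
    fun j k => hHZ.comp (measurable_pi_apply j) (measurable_pi_apply k)
  have iHε' : ∀ j, IndepFun (fun ω => H ω j) ε μ :=
    fun j => hHε.comp (measurable_pi_apply j) measurable_id
  have iZε' : ∀ k, IndepFun (fun ω => Z ω k) ε μ :=
    fun k => hZε.comp (measurable_pi_apply k) measurable_id
  -- vanishing of integrals of products of independent centered variables
  have indep_zero : ∀ (f g : Ω → ℝ), IndepFun f g μ → MemLp f 2 μ → MemLp g 2 μ →
      (∫ ω, g ω ∂μ) = 0 → ∫ ω, f ω * g ω ∂μ = 0 := by
    intro f g hfg hf hg hg0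
    calc ∫ ω, f ω * g ω ∂μ = ∫ ω, (f * g) ω ∂μ := rfl
    _ = (∫ ω, f ω ∂μ) * ∫ ω, g ω ∂μ :=
        hfg.integral_mul_eq_mul_integral hf.aestronglyMeasurable hg.aestronglyMeasurable
    _ = 0 := by rw [hg0, mul_zero]
  have eHX₁ : ∀ j i, ∫ ω, H ω j * X₁ ω i ∂μ = 0 :=
    fun j i => indep_zero _ _ (iHX₁ j i) (hH2 j) (hX₁2 i) (hX₁mean i)
  have eZX₁ : ∀ k i, ∫ ω, Z ω k * X₁ ω i ∂μ = 0 :=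
    fun k i => indep_zero _ _ (iZX₁ k i) (hZ2 k) (hX₁2 i) (hX₁mean i)
  have eεX₁ : ∀ i, ∫ ω, ε ω * X₁ ω i ∂μ = 0 :=
    fun i => indep_zero _ _ (iεX₁ i) hε2 (hX₁2 i) (hX₁mean i)
  have eHZ : ∀ j k, ∫ ω, H ω j * Z ω k ∂μ = 0 :=
    fun j k => indep_zero _ _ (iHZ' j k) (hH2 j) (hZ2 k) (hZmean k)
  have eHε : ∀ j, ∫ ω, H ω j * ε ω ∂μ = 0 :=
    fun j => indep_zero _ _ (iHε' j) (hH2 j) hε2 hεmean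
  have eZε : ∀ k, ∫ ω, Z ω k * ε ω ∂μ = 0 :=
    fun k => indep_zero _ _ (iZε' k) (hZ2 k) hε2 hεmean
  have eZH : ∀ k j, ∫ ω, Z ω k * H ω j ∂μ = 0 := fun k j => by
    rw [my_int_comm]; exact eHZ j k
  have eεH : ∀ j, ∫ ω, ε ω * H ω j ∂μ = 0 := fun j => by
    rw [my_int_comm]; exact eHε j
  have eεZ : ∀ k, ∫ ω, ε ω * Z ω k ∂μ = 0 := fun k => by
    rw [my_int_comm]; exact eZε k
  -- expansion of integrals against X₂
  have expandX₂ : ∀ (k) (G : Ω → ℝ), MemLp G 2 μ →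
      ∫ ω, X₂ ω k * G ω ∂μ
        = (∑ j, Θ k j * ∫ ω, H ω j * G ω ∂μ) + ∫ ω, Z ω k * G ω ∂μ := by
    intro k G hG
    have h1 : ∀ j, Integrable (fun ω => H ω j * G ω) μ := fun j => my_int_mul (hH2 j) hG
    have h2 : Integrable (fun ω => Z ω k * G ω) μ := my_int_mul (hZ2 k) hG
    have h3 : (fun ω => X₂ ω k * G ω)
        = fun ω => (∑ j, Θ k j * H ω j) * G ω + Z ω k * G ω := by
      funext ω; rw [hX₂ ω k, add_mul]
    have h4 : Integrable (fun ω => (∑ j, Θ k j * H ω j) * G ω) μ :=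
      my_int_mul (memLp_finset_sum _ fun j _ => (hH2 j).const_mul (Θ k j)) hG
    rw [h3, integral_add h4 h2, my_sum_mul μ _ _ _ h1]
  have eX₂X₁ : ∀ k i, ∫ ω, X₂ ω k * X₁ ω i ∂μ = 0 := fun k i => by
    rw [expandX₂ k _ (hX₁2 i)]
    simp [eHX₁, eZX₁]
  have eX₁X₂ : ∀ i k, ∫ ω, X₁ ω i * X₂ ω k ∂μ = 0 := fun i k => by
    rw [my_int_comm]; exact eX₂X₁ k i
  have eHX₂ : ∀ j k, ∫ ω, H ω j * X₂ ω k ∂μ = Θ k j := fun j k => by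
    rw [my_int_comm, expandX₂ k _ (hH2 j)]
    simp [hHcov, eZH, mul_ite]
  have eεX₂ : ∀ k, ∫ ω, ε ω * X₂ ω k ∂μ = 0 := fun k => by
    rw [my_int_comm, expandX₂ k _ hε2]
    simp [eHε, eZε]
  have eX₂X₂ : ∀ l k, ∫ ω, X₂ ω l * X₂ ω k ∂μ = A l k := fun l k => by
    rw [expandX₂ l _ (hX₂2 k)]
    have hZX₂ : ∫ ω, Z ω l * X₂ ω k ∂μ = if l = k then σζsq l else 0 := by
      rw [my_int_comm, expandX₂ k _ (hZ2 l)]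
      rcases eq_or_ne l k with h | h
      · subst h; simp [eHZ, hZcov]
      · simp [eHZ, hZcov, h, Ne.symm h]
    rw [hZX₂]
    simp [hAdef, Matrix.mul_apply, Matrix.add_apply, Matrix.diagonal_apply,
      Matrix.transpose_apply, eHX₂]
  -- the residual
  set R : Ω → ℝ := fun ω => ((∑ j, η j * H ω j) + ε ω) - ∑ k, v k * X₂ ω k with hRset
  have memηH : MemLp (fun ω => (∑ j, η j * H ω j) + ε ω) 2 μ :=
    (memLp_finset_sum _ fun j _ => (hH2 j).const_mul (η j)).add hε2
  have memvX₂ : MemLp (fun ω => ∑ k, v k * X₂ ω k) 2 μ :=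
    memLp_finset_sum _ fun k _ => (hX₂2 k).const_mul (v k)
  have hR2 : MemLp R 2 μ := by rw [hRset]; exact memηH.sub memvX₂
  have expandR : ∀ (G : Ω → ℝ), MemLp G 2 μ →
      ∫ ω, R ω * G ω ∂μ = ((∑ j, η j * ∫ ω, H ω j * G ω ∂μ) + ∫ ω, ε ω * G ω ∂μ)
          - ∑ k, v k * ∫ ω, X₂ ω k * G ω ∂μ := by
    intro G hG
    have hf1 : ∀ j, Integrable (fun ω => H ω j * G ω) μ := fun j => my_int_mul (hH2 j) hG
    have hf2 : Integrable (fun ω => ε ω * G ω) μ := my_int_mul hε2 hG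
    have hf3 : ∀ k, Integrable (fun ω => X₂ ω k * G ω) μ := fun k => my_int_mul (hX₂2 k) hG
    have key : (fun ω => R ω * G ω)
        = fun ω => ((∑ j, η j * H ω j) + ε ω) * G ω - (∑ k, v k * X₂ ω k) * G ω := by
      funext ω
      simp only [hRset]
      rw [sub_mul]
    have key2 : (fun ω => ((∑ j, η j * H ω j) + ε ω) * G ω)
        = fun ω => (∑ j, η j * H ω j) * G ω + ε ω * G ω := by
      funext ω; rw [add_mul]
    have h5 : Integrable (fun ω => (∑ j, η j * H ω j) * G ω) μ :=
      my_int_mul (memLp_finset_sum _ fun j _ => (hH2 j).const_mul (η j)) hG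
    rw [key, integral_sub (my_int_mul memηH hG) (my_int_mul memvX₂ hG), key2,
      integral_add h5 hf2, my_sum_mul μ _ _ _ hf1, my_sum_mul μ _ _ _ hf3]
  have orthX₁ : ∀ i, ∫ ω, R ω * X₁ ω i ∂μ = 0 := fun i => by
    rw [expandR _ (hX₁2 i)]
    simp [eHX₁, eεX₁, eX₂X₁]
  have orthX₂ : ∀ k, ∫ ω, R ω * X₂ ω k ∂μ = 0 := fun k => by
    rw [expandR _ (hX₂2 k)]
    simp only [eHX₂, eεX₂, eX₂X₂, add_zero]
    have h1 : ∑ l, v l * A l k = ∑ j, Θ k j * η j := by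
      have h2 : ∑ l, v l * A l k = (A *ᵥ v) k := by
        simp only [Matrix.mulVec, dotProduct]
        exact Finset.sum_congr rfl fun l _ => by rw [hAsymm l k]; ring
      rw [h2, hAv]
      simp [Matrix.mulVec, dotProduct]
    rw [h1, sub_eq_zero]
    exact Finset.sum_congr rfl fun j _ => mul_comm _ _
  -- components of the appended vector
  have hXf2 : ∀ i, MemLp (fun ω => Fin.append (X₁ ω) (X₂ ω) i) 2 μ := by
    intro i
    refine Fin.addCases
      (motive := fun i => MemLp (fun ω => Fin.append (X₁ ω) (X₂ ω) i) 2 μ)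
      (fun i₀ => ?_) (fun k₀ => ?_) i
    · simpa only [Fin.append_left] using hX₁2 i₀
    · simpa only [Fin.append_right] using hX₂2 k₀
  have orth : ∀ i, ∫ ω, R ω * Fin.append (X₁ ω) (X₂ ω) i ∂μ = 0 := by
    intro i
    refine Fin.addCases
      (motive := fun i => ∫ ω, R ω * Fin.append (X₁ ω) (X₂ ω) i ∂μ = 0)
      (fun i₀ => ?_) (fun k₀ => ?_) i
    · simpa only [Fin.append_left] using orthX₁ i₀
    · simpa only [Fin.append_right] using orthX₂ k₀
  have hXfg2 : ∀ d : Fin (p + q) → ℝ,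
      MemLp (fun ω => ∑ i, d i * Fin.append (X₁ ω) (X₂ ω) i) 2 μ :=
    fun d => memLp_finset_sum _ fun i _ => (hXf2 i).const_mul _
  have hGzero : ∀ d : Fin (p + q) → ℝ,
      ∫ ω, R ω * (∑ i, d i * Fin.append (X₁ ω) (X₂ ω) i) ∂μ = 0 := by
    intro d
    rw [my_int_comm, my_sum_mul μ d _ R (fun i => my_int_mul (hXf2 i) hR2)]
    refine Finset.sum_eq_zero fun i _ => ?_
    rw [my_int_comm, orth i, mul_zero]
  -- identification of the residual
  have hRdefY : ∀ ω, Y ω - ∑ i, ws i * Fin.append (X₁ ω) (X₂ ω) i = R ω := by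
    intro ω
    rw [hY ω, Fin.sum_univ_add]
    simp only [hws, Fin.append_left, Fin.append_right, hRset]
    ring
  -- key decomposition of the objective
  have decomp : ∀ w : Fin (p + q) → ℝ,
      ∫ ω, (Y ω - ∑ i, w i * Fin.append (X₁ ω) (X₂ ω) i) ^ 2 ∂μ
        = ∫ ω, R ω ^ 2 ∂μ
          + ∫ ω, (∑ i, (w i - ws i) * Fin.append (X₁ ω) (X₂ ω) i) ^ 2 ∂μ := by
    intro w
    have hg2 : MemLp (fun ω => ∑ i, (w i - ws i) * Fin.append (X₁ ω) (X₂ ω) i) 2 μ :=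
      hXfg2 _
    have hident : (fun ω => (Y ω - ∑ i, w i * Fin.append (X₁ ω) (X₂ ω) i) ^ 2)
        = fun ω => R ω ^ 2 + (∑ i, (w i - ws i) * Fin.append (X₁ ω) (X₂ ω) i) ^ 2
            - 2 * (R ω * ∑ i, (w i - ws i) * Fin.append (X₁ ω) (X₂ ω) i) := by
      funext ω
      have h1 := hRdefY ω
      have h2 : (∑ i, (w i - ws i) * Fin.append (X₁ ω) (X₂ ω) i)
          = (∑ i, w i * Fin.append (X₁ ω) (X₂ ω) i)
            - ∑ i, ws i * Fin.append (X₁ ω) (X₂ ω) i := by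
        rw [← Finset.sum_sub_distrib]
        exact Finset.sum_congr rfl fun i _ => sub_mul _ _ _
      have h3 : Y ω - ∑ i, w i * Fin.append (X₁ ω) (X₂ ω) i
          = R ω - ∑ i, (w i - ws i) * Fin.append (X₁ ω) (X₂ ω) i := by
        rw [h2, ← h1]; ring
      rw [h3]; ring
    have hint1 : Integrable (fun ω => R ω ^ 2
        + (∑ i, (w i - ws i) * Fin.append (X₁ ω) (X₂ ω) i) ^ 2) μ :=
      hR2.integrable_sq.add hg2.integrable_sq
    rw [hident, integral_sub hint1 ((my_int_mul hR2 hg2).const_mul 2),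
      integral_add hR2.integrable_sq hg2.integrable_sq, integral_const_mul,
      hGzero _, mul_zero, sub_zero]
  have hminzero : ∫ ω, (∑ i, (ws i - ws i) * Fin.append (X₁ ω) (X₂ ω) i) ^ 2 ∂μ = 0 := by
    simp
  constructor
  · intro w
    rw [decomp w, decomp ws, hminzero, add_zero]
    have h2 : 0 ≤ ∫ ω, (∑ i, (w i - ws i) * Fin.append (X₁ ω) (X₂ ω) i) ^ 2 ∂μ :=
      integral_nonneg fun ω => sq_nonneg _
    linarith
  · intro w hw
    have hle := hw ws
    rw [decomp w, decomp ws, hminzero, add_zero] at hle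
    have h2 : 0 ≤ ∫ ω, (∑ i, (w i - ws i) * Fin.append (X₁ ω) (X₂ ω) i) ^ 2 ∂μ :=
      integral_nonneg fun ω => sq_nonneg _
    have hg0 : ∫ ω, (∑ i, (w i - ws i) * Fin.append (X₁ ω) (X₂ ω) i) ^ 2 ∂μ = 0 :=
      le_antisymm (by linarith) h2
    -- express the vanishing integral as a quadratic form
    have hquad : ∀ d : Fin (p + q) → ℝ,
        ∫ ω, (∑ i, d i * Fin.append (X₁ ω) (X₂ ω) i) ^ 2 ∂μ
          = ∑ i, d i * ∑ i', d i' *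
              ∫ ω, Fin.append (X₁ ω) (X₂ ω) i' * Fin.append (X₁ ω) (X₂ ω) i ∂μ := by
      intro d
      have e1 : (fun ω => (∑ i, d i * Fin.append (X₁ ω) (X₂ ω) i) ^ 2)
          = fun ω => (∑ i, d i * Fin.append (X₁ ω) (X₂ ω) i)
              * ∑ i, d i * Fin.append (X₁ ω) (X₂ ω) i := by
        funext ω; ring
      rw [e1, my_sum_mul μ d _ _ (fun i => my_int_mul (hXf2 i) (hXfg2 d))]
      refine Finset.sum_congr rfl fun i _ => ?_
      congr 1
      rw [my_int_comm, my_sum_mul μ d _ _ (fun i' => my_int_mul (hXf2 i') (hXf2 i))]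
    have hS := hquad (fun i => w i - ws i)
    rw [hg0] at hS
    simp only [Fin.sum_univ_add, Fin.append_left, Fin.append_right, hws] at hS
    simp only [eX₂X₁, eX₁X₂, eX₂X₂, mul_zero, Finset.sum_const_zero, add_zero,
      zero_add] at hS
    -- abbreviations for the two difference vectors
    have hq1 := my_quadform (Matrix.of fun i i' : Fin p => ∫ ω, X₁ ω i * X₁ ω i' ∂μ)
      (fun i => w (Fin.castAdd q i) - γ i)
    have hq2 := my_quadform A (fun k => w (Fin.natAdd p k) - v k)
    simp only [Matrix.of_apply] at hq1
    rw [hq1, hq2] at hS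
    have star1 : star (fun i => w (Fin.castAdd q i) - γ i) = fun i => w (Fin.castAdd q i) - γ i :=
      funext fun _ => star_trivial _
    have star2 : star (fun k => w (Fin.natAdd p k) - v k) = fun k => w (Fin.natAdd p k) - v k :=
      funext fun _ => star_trivial _
    have htrans1 : (Matrix.of fun i i' : Fin p => ∫ ω, X₁ ω i * X₁ ω i' ∂μ)ᵀ
        = Matrix.of fun i i' : Fin p => ∫ ω, X₁ ω i * X₁ ω i' ∂μ := by
      ext i i'
      simp only [Matrix.transpose_apply, Matrix.of_apply]
      exact my_int_comm μ _ _
    have htrans2 : Aᵀ = A := by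
      ext l k; simp only [Matrix.transpose_apply]; exact hAsymm k l
    rw [htrans1, htrans2] at hS
    have h1nn : 0 ≤ dotProduct (fun i => w (Fin.castAdd q i) - γ i)
        ((Matrix.of fun i i' : Fin p => ∫ ω, X₁ ω i * X₁ ω i' ∂μ) *ᵥ
          fun i => w (Fin.castAdd q i) - γ i) := by
      have h := hSigma1pd.posSemidef.dotProduct_mulVec_nonneg (fun i => w (Fin.castAdd q i) - γ i)
      rwa [star1] at h
    have h2nn : 0 ≤ dotProduct (fun k => w (Fin.natAdd p k) - v k)
        (A *ᵥ fun k => w (Fin.natAdd p k) - v k) := by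
      have h := hApd.posSemidef.dotProduct_mulVec_nonneg (fun k => w (Fin.natAdd p k) - v k)
      rwa [star2] at h
    have hd1 : (fun i => w (Fin.castAdd q i) - γ i) = 0 := by
      by_contra hne
      have h := hSigma1pd.dotProduct_mulVec_pos (x := fun i => w (Fin.castAdd q i) - γ i) hne
      rw [star1] at h
      linarith
    have hd2 : (fun k => w (Fin.natAdd p k) - v k) = 0 := by
      by_contra hne
      have h := hApd.dotProduct_mulVec_pos (x := fun k => w (Fin.natAdd p k) - v k) hne
      rw [star2] at h
      linarith
    funext i
    refine Fin.addCases (motive := fun i => w i = ws i) (fun i₀ => ?_) (fun k₀ => ?_) i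
    · have h := congrFun hd1 i₀
      simp only [Pi.zero_apply] at h
      simp only [hws, Fin.append_left]
      linarith
    · have h := congrFun hd2 k₀
      simp only [Pi.zero_apply] at h
      simp only [hws, Fin.append_right]
      linarith
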